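/- In the graph-directed setting on a complete, normal, regular semi-metric space, there exists at most one q-tuple H of non-empty bounded closed subsets with T(H) = H, where T(H)_i = ∪_j ∪_{e ∈ E_{i,j}} f_e(H_j) and each f_e is a φ_e-contraction for right-continuous comparison functions φ_e. -/

import Mathlib

open Filter Topology Set

noncomputable section

/-- A semi-metric: symmetric, vanishing exactly on the diagonal (no triangle inequality). -/
def IsSemiMetric {X : Type*} (d : X → X → NNReal) : Prop :=
  (∀ x y, d x y = d y x) ∧ ∀ x y, d x y = 0 ↔ x = y

/-- Ball of radius `r` around `x`. -/
def SMBall {X : Type*} (d : X → X → NNReal) (x : X) (r : NNReal) : Set X := {y | d x y < r}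

/-- The basic triangle function `Φ_d(u,v) = sup{d(x,y) : ∃ z, d(x,z) ≤ u, d(y,z) ≤ v}`. -/
def SMPhi {X : Type*} (d : X → X → NNReal) (u v : NNReal) : ENNReal :=
  ⨆ (p : X × X) (_ : ∃ z : X, d p.1 z ≤ u ∧ d p.2 z ≤ v), (d p.1 p.2 : ENNReal)

/-- Normal property: the basic triangle function is finite-valued. -/
def SMNormal {X : Type*} (d : X → X → NNReal) : Prop := ∀ u v : NNReal, SMPhi d u v < ⊤

/-- Regular property: the basic triangle function is continuous at `(0,0)`. -/
def SMRegular {X : Type*} (d : X → X → NNReal) : Prop :=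
  ∀ ε : NNReal, 0 < ε → ∃ δ : NNReal, 0 < δ ∧
    ∀ u v : NNReal, u ≤ δ → v ≤ δ → SMPhi d u v < (ε : ENNReal)

/-- Cauchy sequence with respect to a semi- or pre-metric. -/
def SMCauchy {X : Type*} (d : X → X → NNReal) (x : ℕ → X) : Prop :=
  ∀ ε : NNReal, 0 < ε → ∃ N : ℕ, ∀ m ≥ N, ∀ n ≥ N, d (x m) (x n) < ε

/-- Completeness: every Cauchy sequence converges. -/
def SMComplete {X : Type*} (d : X → X → NNReal) : Prop :=
  ∀ x : ℕ → X, SMCauchy d x → ∃ l : X, Tendsto (fun n => d (x n) l) atTop (𝓝 0)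

/-- Boundedness: contained in some ball. -/
def SMBounded {X : Type*} (d : X → X → NNReal) (H : Set X) : Prop :=
  ∃ (x₀ : X) (r : NNReal), H ⊆ SMBall d x₀ r

/-- Comparison function: increasing, with iterates tending to zero on `(0,∞)`. -/
def SMComparison (φ : NNReal → NNReal) : Prop :=
  Monotone φ ∧ ∀ t : NNReal, 0 < t → Tendsto (fun n => φ^[n] t) atTop (𝓝 0)

/-- Right-continuity of a function `[0,∞) → [0,∞)`. -/
def SMRightCont (φ : NNReal → NNReal) : Prop :=
  ∀ t : NNReal, ContinuousWithinAt φ (Ici t) t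

/-- Diameter of a set. -/
def SMdiam {X : Type*} (d : X → X → NNReal) (H : Set X) : ENNReal :=
  ⨆ (x ∈ H) (y ∈ H), (d x y : ENNReal)

/-- `r`-neighborhood of a set. -/
def SMnbhd {X : Type*} (d : X → X → NNReal) (A : Set X) (r : NNReal) : Set X :=
  ⋃ x ∈ A, SMBall d x r

/-- Kuratowski measure of non-compactness. -/
def SMchi {X : Type*} (d : X → X → NNReal) (H : Set X) : ENNReal :=
  sInf {c : ENNReal | ∃ r : NNReal, c = (r : ENNReal) ∧ 0 < r ∧
    ∃ s : Finset X, H ⊆ ⋃ x ∈ s, SMBall d x r}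

/-- Hausdorff-Pompeiu distance between subsets. -/
def SMdHP {X : Type*} (d : X → X → NNReal) (A B : Set X) : ENNReal :=
  sInf {c : ENNReal | ∃ r : NNReal, c = (r : ENNReal) ∧ 0 < r ∧
    A ⊆ SMnbhd d B r ∧ B ⊆ SMnbhd d A r}

/-- Open sets of the semi-metric topology. -/
def SMOpen {X : Type*} (d : X → X → NNReal) (U : Set X) : Prop :=
  ∀ x ∈ U, ∃ r : NNReal, 0 < r ∧ SMBall d x r ⊆ U

/-- Closed sets of the semi-metric topology. -/
def SMClosed {X : Type*} (d : X → X → NNReal) (A : Set X) : Prop := SMOpen d Aᶜ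

/-- Max semi-metric on `X^q`. -/
def SMmax {X : Type*} (q : ℕ) (d : X → X → NNReal) (x y : Fin q → X) : NNReal :=
  Finset.univ.sup fun i => d (x i) (y i)

/-- Membership in a neighborhood. -/
lemma SMnbhd_mem_iff {X : Type*} (d : X → X → NNReal) (A : Set X) (r : NNReal) (a : X) :
    a ∈ SMnbhd d A r ↔ ∃ b ∈ A, d b a < r := by
  simp [SMnbhd, SMBall, Set.mem_iUnion]

lemma SMnbhd_mono {X : Type*} (d : X → X → NNReal) (A : Set X) {r s : NNReal} (h : r ≤ s) :
    SMnbhd d A r ⊆ SMnbhd d A s := by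
  intro a ha
  rw [SMnbhd_mem_iff] at ha ⊢
  obtain ⟨b, hb, hlt⟩ := ha
  exact ⟨b, hb, lt_of_lt_of_le hlt h⟩

/-- A bound on `d a b₀` for `a` ranging in a bounded set. -/
lemma sm_bound_aux {X : Type*} {d : X → X → NNReal} (hsymm : ∀ x y, d x y = d y x)
    (hnorm : SMNormal d) {A : Set X} (hA : SMBounded d A) (b₀ : X) :
    ∃ M : NNReal, ∀ a ∈ A, d a b₀ ≤ M := by
  obtain ⟨x₀, r₁, hsub⟩ := hA
  refine ⟨(SMPhi d r₁ (d b₀ x₀)).toNNReal, fun a ha => ?_⟩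
  have h1 : (d a b₀ : ENNReal) ≤ SMPhi d r₁ (d b₀ x₀) := by
    refine le_trans ?_ (le_iSup₂ (f := fun (p : X × X)
      (_ : ∃ z : X, d p.1 z ≤ r₁ ∧ d p.2 z ≤ d b₀ x₀) => (d p.1 p.2 : ENNReal))
      (a, b₀) ⟨x₀, ?_, le_refl _⟩)
    · exact le_refl _
    · rw [hsymm]; exact le_of_lt (hsub ha)
  have h2 : ((SMPhi d r₁ (d b₀ x₀)).toNNReal : ENNReal) = SMPhi d r₁ (d b₀ x₀) :=
    ENNReal.coe_toNNReal (hnorm r₁ (d b₀ x₀)).ne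
  exact ENNReal.coe_le_coe.mp (h1.trans_eq h2.symm)

/-- Finiteness of the Hausdorff–Pompeiu distance between nonempty bounded sets. -/
lemma SMdHP_lt_top {X : Type*} {d : X → X → NNReal} (hsymm : ∀ x y, d x y = d y x)
    (hnorm : SMNormal d) {A B : Set X} (hAne : A.Nonempty) (hA : SMBounded d A)
    (hBne : B.Nonempty) (hB : SMBounded d B) : SMdHP d A B < ⊤ := by
  obtain ⟨a₀, ha₀⟩ := hAne
  obtain ⟨b₀, hb₀⟩ := hBne
  obtain ⟨M, hM⟩ := sm_bound_aux hsymm hnorm hA b₀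
  obtain ⟨N, hN⟩ := sm_bound_aux hsymm hnorm hB a₀
  have hmem : ((M ⊔ N + 1 : NNReal) : ENNReal) ∈ {c : ENNReal | ∃ r : NNReal,
      c = (r : ENNReal) ∧ 0 < r ∧ A ⊆ SMnbhd d B r ∧ B ⊆ SMnbhd d A r} := by
    refine ⟨M ⊔ N + 1, rfl, by positivity, fun a ha => ?_, fun b hb => ?_⟩
    · rw [SMnbhd_mem_iff]
      refine ⟨b₀, hb₀, ?_⟩
      rw [hsymm]
      exact lt_of_le_of_lt ((hM a ha).trans le_sup_left) (lt_add_of_pos_right _ one_pos)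
    · rw [SMnbhd_mem_iff]
      refine ⟨a₀, ha₀, ?_⟩
      rw [hsymm]
      exact lt_of_le_of_lt ((hN b hb).trans le_sup_right) (lt_add_of_pos_right _ one_pos)
  exact lt_of_le_of_lt (sInf_le hmem) ENNReal.coe_lt_top

/-- If the Hausdorff–Pompeiu distance vanishes and both sets are closed, they are equal. -/
lemma SMdHP_eq_zero_imp {X : Type*} {d : X → X → NNReal} (hsymm : ∀ x y, d x y = d y x)
    {A B : Set X} (hAc : SMClosed d A) (hBc : SMClosed d B) (h : SMdHP d A B = 0) :
    A = B := by
  have key : ∀ ρ : NNReal, 0 < ρ → ∃ r : NNReal, A ⊆ SMnbhd d B r ∧ B ⊆ SMnbhd d A r ∧ r < ρ := by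
    intro ρ hρ
    have hlt : SMdHP d A B < (ρ : ENNReal) := by
      rw [h]; exact_mod_cast hρ
    obtain ⟨c, ⟨r, rfl, _, h1, h2⟩, hcρ⟩ := sInf_lt_iff.mp hlt
    exact ⟨r, h1, h2, ENNReal.coe_lt_coe.mp hcρ⟩
  apply Set.Subset.antisymm
  · intro a ha
    by_contra hnB
    obtain ⟨ρ, hρ, hball⟩ := hBc a hnB
    obtain ⟨r, h1, _, hrρ⟩ := key ρ hρ
    obtain ⟨b, hb, hdb⟩ := (SMnbhd_mem_iff d B r a).mp (h1 ha)
    have : b ∈ SMBall d a ρ := by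
      simp only [SMBall, Set.mem_setOf_eq]
      rw [hsymm]
      exact hdb.trans hrρ
    exact hball this hb
  · intro b hb
    by_contra hnA
    obtain ⟨ρ, hρ, hball⟩ := hAc b hnA
    obtain ⟨r, _, h2, hrρ⟩ := key ρ hρ
    obtain ⟨a, ha, hda⟩ := (SMnbhd_mem_iff d A r b).mp (h2 hb)
    have : a ∈ SMBall d b ρ := by
      simp only [SMBall, Set.mem_setOf_eq]
      rw [hsymm]
      exact hda.trans hrρ
    exact hball this ha

/-- A comparison function is strictly contractive. -/
lemma SMComparison.lt_self {φ : NNReal → NNReal} (hφ : SMComparison φ) {t : NNReal}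
    (ht : 0 < t) : φ t < t := by
  by_contra hle
  push_neg at hle
  have hiter : ∀ n, t ≤ φ^[n] t := by
    intro n
    induction n with
    | zero => simp
    | succ n ih =>
      rw [Function.iterate_succ_apply']
      exact hle.trans (hφ.1 ih)
  have := ge_of_tendsto (hφ.2 t ht) (Filter.Eventually.of_forall hiter)
  exact absurd (ht.trans_le this) (lt_irrefl 0)

/-- Finite sup of right-continuous functions is right-continuous. -/
lemma finset_sup_contWithin {E : Type*} (s : Finset E) (φ : E → NNReal → NNReal)
    (h : ∀ e, ContinuousWithinAt (φ e) (Ici t) t) :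
    ContinuousWithinAt (fun x => s.sup fun e => φ e x) (Ici t) t := by
  induction s using Finset.cons_induction with
  | empty => simpa using continuousWithinAt_const
  | cons a s ha ih =>
    simp only [Finset.sup_cons]
    exact (h a).sup ih

theorem stmt16 {X : Type*} (d : X → X → NNReal) (hd : IsSemiMetric d)
    (hnorm : SMNormal d) (hreg : SMRegular d) (hc : SMComplete d)
    {q : ℕ} (E : Type*) [Fintype E] (src tgt : E → Fin q)
    (hout : ∀ i : Fin q, ∃ e : E, src e = i)
    (φ : E → NNReal → NNReal) (hφ : ∀ e, SMComparison (φ e) ∧ SMRightCont (φ e))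
    (f : E → X → X) (hf : ∀ e x y, d (f e x) (f e y) ≤ φ e (d x y))
    (H₁ H₂ : Fin q → Set X)
    (h₁ne : ∀ i, (H₁ i).Nonempty) (h₁b : ∀ i, SMBounded d (H₁ i))
    (h₁c : ∀ i, SMClosed d (H₁ i))
    (h₂ne : ∀ i, (H₂ i).Nonempty) (h₂b : ∀ i, SMBounded d (H₂ i))
    (h₂c : ∀ i, SMClosed d (H₂ i))
    (h₁inv : ∀ i, (⋃ (e : E) (_ : src e = i), f e '' H₁ (tgt e)) = H₁ i)
    (h₂inv : ∀ i, (⋃ (e : E) (_ : src e = i), f e '' H₂ (tgt e)) = H₂ i) :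
    H₁ = H₂ := by
  obtain ⟨hsymm, hzero⟩ := hd
  funext i₀
  obtain ⟨e₀, he₀⟩ := hout i₀
  -- the supremum of the coordinatewise Hausdorff–Pompeiu distances
  set Dh : Fin q → ENNReal := fun i => SMdHP d (H₁ i) (H₂ i) with hDh
  set D : ENNReal := ⨆ i, Dh i with hDdef
  have hDhlt : ∀ i, Dh i < ⊤ := fun i =>
    SMdHP_lt_top hsymm hnorm (h₁ne i) (h₁b i) (h₂ne i) (h₂b i)
  have hDlt : D < ⊤ := by
    have : D ≤ ((Finset.univ.sup fun i => (Dh i).toNNReal : NNReal) : ENNReal) := by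
      refine iSup_le fun i => ?_
      rw [← ENNReal.coe_toNNReal (hDhlt i).ne]
      exact_mod_cast Finset.le_sup (f := fun i => (Dh i).toNNReal) (Finset.mem_univ i)
    exact lt_of_le_of_lt this ENNReal.coe_lt_top
  -- the combined comparison function
  set Φ : NNReal → NNReal := fun s => Finset.univ.sup fun e => φ e s with hΦdef
  -- main contraction estimate
  have hmain : ∀ r : NNReal, D < (r : ENNReal) → D ≤ (Φ r : ENNReal) := by
    intro r hr
    -- every coordinate pair is within `r` of each other
    have hj : ∀ j, H₁ j ⊆ SMnbhd d (H₂ j) r ∧ H₂ j ⊆ SMnbhd d (H₁ j) r := by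
      intro j
      have : Dh j < (r : ENNReal) := lt_of_le_of_lt (le_iSup Dh j) hr
      obtain ⟨c, ⟨rj, rfl, _, h1, h2⟩, hcr⟩ := sInf_lt_iff.mp this
      have hrjr : rj ≤ r := le_of_lt (ENNReal.coe_lt_coe.mp hcr)
      exact ⟨h1.trans (SMnbhd_mono d _ hrjr), h2.trans (SMnbhd_mono d _ hrjr)⟩
    -- the image sets are within `Φ r + ε` of each other
    refine ENNReal.le_of_forall_pos_le_add fun ε hε _ => ?_
    rw [← ENNReal.coe_add]
    refine iSup_le fun i => ?_
    have incl1 : H₁ i ⊆ SMnbhd d (H₂ i) (Φ r + ε) := by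
      intro a ha
      rw [← h₁inv i] at ha
      simp only [Set.mem_iUnion] at ha
      obtain ⟨e, hsrc, x, hx, rfl⟩ := ha
      obtain ⟨y, hy, hdyx⟩ := (SMnbhd_mem_iff d _ r x).mp ((hj (tgt e)).1 hx)
      rw [SMnbhd_mem_iff]
      refine ⟨f e y, ?_, ?_⟩
      · rw [← h₂inv i]
        simp only [Set.mem_iUnion]
        exact ⟨e, hsrc, Set.mem_image_of_mem _ hy⟩
      · calc d (f e y) (f e x) ≤ φ e (d y x) := hf e y x
          _ ≤ φ e r := (hφ e).1.1 hdyx.le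
          _ ≤ Φ r := Finset.le_sup (f := fun e => φ e r) (Finset.mem_univ e)
          _ < Φ r + ε := lt_add_of_pos_right _ hε
    have incl2 : H₂ i ⊆ SMnbhd d (H₁ i) (Φ r + ε) := by
      intro a ha
      rw [← h₂inv i] at ha
      simp only [Set.mem_iUnion] at ha
      obtain ⟨e, hsrc, x, hx, rfl⟩ := ha
      obtain ⟨y, hy, hdyx⟩ := (SMnbhd_mem_iff d _ r x).mp ((hj (tgt e)).2 hx)
      rw [SMnbhd_mem_iff]
      refine ⟨f e y, ?_, ?_⟩
      · rw [← h₁inv i]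
        simp only [Set.mem_iUnion]
        exact ⟨e, hsrc, Set.mem_image_of_mem _ hy⟩
      · calc d (f e y) (f e x) ≤ φ e (d y x) := hf e y x
          _ ≤ φ e r := (hφ e).1.1 hdyx.le
          _ ≤ Φ r := Finset.le_sup (f := fun e => φ e r) (Finset.mem_univ e)
          _ < Φ r + ε := lt_add_of_pos_right _ hε
    exact sInf_le ⟨Φ r + ε, rfl, by positivity, incl1, incl2⟩
  -- conclude D = 0 via right-continuity and strict contractivity
  set t : NNReal := D.toNNReal with htdef
  have hDt : D = (t : ENNReal) := (ENNReal.coe_toNNReal hDlt.ne).symm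
  have ht0 : t = 0 := by
    by_contra ht
    have ht' : 0 < t := pos_iff_ne_zero.mpr ht
    have hΦt : Φ t < t := by
      exact (Finset.sup_lt_iff (show (⊥ : NNReal) < t from ht')).mpr
        fun e _ => (hφ e).1.lt_self ht'
    have hcont : ContinuousWithinAt Φ (Ici t) t :=
      finset_sup_contWithin Finset.univ φ fun e => (hφ e).2 t
    have hev : ∀ᶠ s in 𝓝[>] t, Φ s < t := by
      have := hcont (Iio_mem_nhds hΦt)
      exact (nhdsWithin_mono t Set.Ioi_subset_Ici_self) this
    obtain ⟨r, hΦr, hrt⟩ := (hev.and self_mem_nhdsWithin).exists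
    have : t ≤ Φ r := by
      have := hmain r (hDt ▸ ENNReal.coe_lt_coe.mpr hrt)
      rw [hDt] at this
      exact_mod_cast this
    exact absurd (this.trans_lt hΦr) (lt_irrefl t)
  have hD0 : D = 0 := by rw [hDt, ht0]; simp
  have : Dh i₀ = 0 := le_antisymm (le_trans (le_iSup Dh i₀) hD0.le) zero_le
  exact SMdHP_eq_zero_imp hsymm (h₁c i₀) (h₂c i₀) this
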